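/- Homogeneity of the sectorial symbol integral: Let m > 0 and N ≥ 1. Let a : ℝⁿ → M(N,ℂ) be continuous with a(cξ) = c^m a(ξ) for all c > 0, ξ ∈ ℝⁿ. Let α₁, α₂ ∈ ℝ with 0 < α₁ − α₂ < 2π, set θ := α₁ − α₂, and let R > 0. Assume that for every ξ ∈ ℝⁿ with |ξ| ≥ 1, the matrix a(ξ) − λ·I is invertible for all λ ∈ ℂ with |λ| ≤ R and for all λ of the form λ = r e^{iα_j} with r > 0, j = 1, 2. For |ξ| ≥ 1 define b(ξ) := −e^{iα₁} ∫_R^∞ (r e^{iα₁})^{−1} (a(ξ) − r e^{iα₁})^{−1} dr − i ∫_0^θ (a(ξ) − R e^{i(α₁−t)})^{−1} dt + e^{iα₂} ∫_R^∞ (r e^{iα₂})^{−1} (a(ξ) − r e^{iα₂})^{−1} dr (the contour integral ∫_{Γ₊} λ^{−1}(a(ξ)−λ)^{−1} dλ over the spectral cut curve consisting of the ray of argument α₁ traversed inward from infinity to radius R, the arc of radius R from angle α₁ clockwise to α₂, and the ray of argument α₂ traversed outward). Then the two improper integrals converge absolutely for every |ξ| ≥ 1, and b(cξ) = c^{−m}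 b(ξ) for all c ≥ 1 and all ξ with |ξ| ≥ 1. -/

import Mathlib

open MeasureTheory
open scoped Matrix.Norms.L2Operator

/-- The contour integral `∫_{Γ₊} λ^{−1}(a(ξ)−λ)^{−1} dλ` of the resolvent of the
principal symbol `a` over the spectral cut curve `Γ₊` made of the ray of argument `α₁`
(traversed inward from infinity to radius `R`), the arc of radius `R` from angle `α₁`
clockwise to `α₂`, and the ray of argument `α₂` (traversed outward). -/
noncomputable def sectorialSymbolIntegral (n N : ℕ)
    (a : EuclideanSpace ℝ (Fin n) → Matrix (Fin N) (Fin N) ℂ)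
    (α₁ α₂ R : ℝ) (ξ : EuclideanSpace ℝ (Fin n)) : Matrix (Fin N) (Fin N) ℂ :=
  -(Complex.exp (Complex.I * (α₁ : ℂ)) •
      ∫ r in Set.Ioi R, ((r : ℂ) * Complex.exp (Complex.I * (α₁ : ℂ)))⁻¹ •
        (a ξ - ((r : ℂ) * Complex.exp (Complex.I * (α₁ : ℂ))) •
          (1 : Matrix (Fin N) (Fin N) ℂ))⁻¹)
    - Complex.I •
      (∫ t in (0 : ℝ)..(α₁ - α₂),
        (a ξ - ((R : ℂ) * Complex.exp (Complex.I * ((α₁ - t : ℝ) : ℂ))) •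
          (1 : Matrix (Fin N) (Fin N) ℂ))⁻¹)
    + Complex.exp (Complex.I * (α₂ : ℂ)) •
      ∫ r in Set.Ioi R, ((r : ℂ) * Complex.exp (Complex.I * (α₂ : ℂ)))⁻¹ •
        (a ξ - ((r : ℂ) * Complex.exp (Complex.I * (α₂ : ℂ))) •
          (1 : Matrix (Fin N) (Fin N) ℂ))⁻¹


section SectorialAux
set_option maxHeartbeats 1000000

variable {N : ℕ}

local notation "M" => Matrix (Fin N) (Fin N) ℂ

lemma aux_smul_sub_inv (A : M) (k w : ℂ) (hk : k ≠ 0)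
    (h : IsUnit (A - (w / k) • (1 : M))) :
    (k • A - w • (1 : M))⁻¹ = k⁻¹ • (A - (w / k) • (1 : M))⁻¹ := by
  have h1 : k • A - w • (1 : M) = k • (A - (w / k) • (1 : M)) := by
    rw [smul_sub, smul_smul, mul_div_cancel₀ _ hk]
  rw [h1]
  apply Matrix.inv_eq_right_inv
  rw [Matrix.smul_mul, Matrix.mul_smul, smul_smul, mul_inv_cancel₀ hk,
    Matrix.mul_nonsing_inv _ ((Matrix.isUnit_iff_isUnit_det _).mp h), one_smul]

lemma aux_inv_eq_ring_inverse_smul (A : M) (lam : ℂ) (hlam : lam ≠ 0)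
    (h : IsUnit (A - lam • (1 : M))) :
    (A - lam • (1 : M))⁻¹ = lam⁻¹ • Ring.inverse (lam⁻¹ • A - (1 : M)) := by
  have hu : IsUnit (lam⁻¹ • A - (1 : M)) := by
    have : lam⁻¹ • A - (1 : M) = lam⁻¹ • (A - lam • (1 : M)) := by
      rw [smul_sub, smul_smul, inv_mul_cancel₀ hlam, one_smul]
    rw [this, Algebra.smul_def]
    exact (IsUnit.map (algebraMap ℂ M) (isUnit_iff_ne_zero.mpr (inv_ne_zero hlam))).mul h
  apply Matrix.inv_eq_right_inv
  have hB : A - lam • (1 : M) = lam • (lam⁻¹ • A - (1 : M)) := by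
    rw [smul_sub, smul_smul, mul_inv_cancel₀ hlam, one_smul]
  rw [hB, Matrix.smul_mul, Matrix.mul_smul, smul_smul, mul_inv_cancel₀ hlam,
    Ring.mul_inverse_cancel _ hu, one_smul]

lemma aux_continuousOn (A : M) (e : ℂ) (he : e ≠ 0)
    (hu : ∀ r : ℝ, 0 < r → IsUnit (A - ((r : ℂ) * e) • (1 : M))) :
    ContinuousOn (fun r : ℝ => ((r : ℂ) * e)⁻¹ • (A - ((r : ℂ) * e) • (1 : M))⁻¹)
      (Set.Ioi 0) := by
  simp only [Matrix.nonsing_inv_eq_ringInverse]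
  intro r hr
  apply ContinuousAt.continuousWithinAt
  have hne : (r : ℂ) * e ≠ 0 :=
    mul_ne_zero (by exact_mod_cast ne_of_gt hr) he
  have hc1 : ContinuousAt (fun r : ℝ => ((r : ℂ) * e)⁻¹) r :=
    ((Complex.continuous_ofReal.continuousAt).mul continuousAt_const).inv₀ hne
  have hc2 : ContinuousAt (fun r : ℝ => A - ((r : ℂ) * e) • (1 : M)) r :=
    continuousAt_const.sub
      (((Complex.continuous_ofReal.continuousAt).mul continuousAt_const).smul
        continuousAt_const)
  have hinv : ContinuousAt Ring.inverse (A - ((r : ℂ) * e) • (1 : M)) := by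
    have h := NormedRing.inverse_continuousAt (hu r hr).unit
    rwa [IsUnit.unit_spec] at h
  exact hc1.smul (ContinuousAt.comp (g := Ring.inverse) hinv hc2)

lemma aux_norm_re (r : ℝ) (α : ℝ) (hr : 0 < r) :
    ‖(r : ℂ) * Complex.exp (Complex.I * α)‖ = r := by
  rw [norm_mul, Complex.norm_exp]
  simp [abs_of_pos hr]

lemma aux_integrableOn (A : M) (α R : ℝ) (hR : 0 < R)
    (hu : ∀ r : ℝ, 0 < r →
      IsUnit (A - ((r : ℂ) * Complex.exp (Complex.I * α)) • (1 : M))) :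
    IntegrableOn (fun r : ℝ => ((r : ℂ) * Complex.exp (Complex.I * α))⁻¹ •
      (A - ((r : ℂ) * Complex.exp (Complex.I * α)) • (1 : M))⁻¹) (Set.Ioi R) volume := by
  set e : ℂ := Complex.exp (Complex.I * α) with he_def
  have he : e ≠ 0 := Complex.exp_ne_zero _
  set f : ℝ → M := fun r => ((r : ℂ) * e)⁻¹ • (A - ((r : ℂ) * e) • (1 : M))⁻¹ with hf_def
  have hcont : ContinuousOn f (Set.Ioi 0) := aux_continuousOn A e he hu
  -- continuity of the auxiliary resolvent at 0
  have h0 : IsUnit ((0 : ℂ) • A - (1 : M)) := by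
    simp only [zero_smul, zero_sub]; exact isUnit_one.neg
  have hg : ContinuousAt (fun μ : ℂ => Ring.inverse (μ • A - (1 : M))) 0 := by
    have hinv : ContinuousAt Ring.inverse ((0 : ℂ) • A - (1 : M)) := by
      have h := NormedRing.inverse_continuousAt h0.unit
      rwa [IsUnit.unit_spec] at h
    exact ContinuousAt.comp (g := Ring.inverse) hinv
      ((continuous_id.smul continuous_const).sub continuous_const).continuousAt
  obtain ⟨δ, hδ, hδb⟩ := Metric.continuousAt_iff.mp hg 1 one_pos
  set C : ℝ := ‖Ring.inverse ((0 : ℂ) • A - (1 : M))‖ + 1 with hC_def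
  have hCb : ∀ μ : ℂ, ‖μ‖ < δ → ‖Ring.inverse (μ • A - (1 : M))‖ ≤ C := by
    intro μ hμ
    have := hδb (by simpa [dist_eq_norm] using hμ)
    rw [dist_eq_norm] at this
    have h3 := norm_sub_norm_le (Ring.inverse (μ • A - (1 : M)))
      (Ring.inverse ((0 : ℂ) • A - (1 : M)))
    rw [hC_def]; linarith
  set T : ℝ := max R δ⁻¹ with hT_def
  have hT0 : 0 < T := lt_of_lt_of_le hR (le_max_left _ _)
  have hbound : ∀ r ∈ Set.Ioi T, ‖f r‖ ≤ C * r ^ (-2 : ℝ) := by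
    intro r hr
    have hrT : T < r := hr
    have hr0 : 0 < r := lt_trans hT0 hrT
    have hlam : (r : ℂ) * e ≠ 0 := mul_ne_zero (by exact_mod_cast ne_of_gt hr0) he
    have hnorm : ‖(r : ℂ) * e‖ = r := aux_norm_re r α hr0
    have hninv : ‖((r : ℂ) * e)⁻¹‖ = r⁻¹ := by rw [norm_inv, hnorm]
    have hμ : ‖((r : ℂ) * e)⁻¹‖ < δ := by
      rw [hninv]
      rw [inv_lt_comm₀ hr0 hδ]
      exact lt_of_le_of_lt (le_max_right R δ⁻¹) hrT
    have hfr : f r = ((r:ℂ)*e)⁻¹ • ((r:ℂ)*e)⁻¹ •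
        Ring.inverse ((((r:ℂ)*e)⁻¹) • A - (1 : M)) := by
      rw [hf_def]
      simp only []
      rw [aux_inv_eq_ring_inverse_smul A _ hlam (hu r hr0)]
    rw [hfr, norm_smul, norm_smul, hninv]
    have h2 : r ^ (-2 : ℝ) = r⁻¹ * r⁻¹ := by
      rw [show (-2 : ℝ) = (-1) + (-1) by norm_num, Real.rpow_add hr0,
        Real.rpow_neg_one]
    rw [h2]
    have hgb := hCb _ hμ
    have h1 : (0:ℝ) ≤ r⁻¹ := inv_nonneg.mpr hr0.le
    calc r⁻¹ * (r⁻¹ * ‖Ring.inverse ((((r:ℂ)*e)⁻¹) • A - (1 : M))‖)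
        ≤ r⁻¹ * (r⁻¹ * C) := by
          apply mul_le_mul_of_nonneg_left _ h1
          exact mul_le_mul_of_nonneg_left hgb h1
      _ = C * (r⁻¹ * r⁻¹) := by ring
  have hIoiT : IntegrableOn f (Set.Ioi T) volume := by
    have hmaj : IntegrableOn (fun r : ℝ => C * r ^ (-2 : ℝ)) (Set.Ioi T) volume :=
      (integrableOn_Ioi_rpow_of_lt (by norm_num) hT0).const_mul C
    apply Integrable.mono' hmaj
    · exact (hcont.mono (fun x hx => lt_trans hT0 hx)).aestronglyMeasurable
        measurableSet_Ioi
    · exact (ae_restrict_iff' measurableSet_Ioi).mpr (Filter.Eventually.of_forall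
        (fun r hr => hbound r hr))
  have hIoc : IntegrableOn f (Set.Ioc R T) volume := by
    have hIcc : Set.Icc R T ⊆ Set.Ioi (0:ℝ) := fun x hx => lt_of_lt_of_le hR hx.1
    exact ((hcont.mono hIcc).integrableOn_Icc).mono_set Set.Ioc_subset_Icc_self
  have := hIoc.union hIoiT
  rwa [Set.Ioc_union_Ioi_eq_Ioi (le_max_left R δ⁻¹)] at this

lemma aux_cauchy (A : M) (α₁ α₂ R' R : ℝ) (hR' : 0 < R') (hR'R : R' ≤ R)
    (hdisc : ∀ w : ℂ, ‖w‖ ≤ R → IsUnit (A - w • (1 : M))) :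
    (∫ x : ℝ in Real.log R'..Real.log R,
        (A - Complex.exp ((x : ℂ) + (α₂ : ℂ) * Complex.I) • (1 : M))⁻¹)
      - (∫ x : ℝ in Real.log R'..Real.log R,
        (A - Complex.exp ((x : ℂ) + (α₁ : ℂ) * Complex.I) • (1 : M))⁻¹)
      + Complex.I • (∫ y : ℝ in α₂..α₁,
        (A - Complex.exp ((Real.log R : ℂ) + (y : ℂ) * Complex.I) • (1 : M))⁻¹)
      - Complex.I • (∫ y : ℝ in α₂..α₁,
        (A - Complex.exp ((Real.log R' : ℂ) + (y : ℂ) * Complex.I) • (1 : M))⁻¹) = 0 := by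
  have hR0 : 0 < R := lt_of_lt_of_le hR' hR'R
  have hlog : Real.log R' ≤ Real.log R := Real.log_le_log hR' hR'R
  have hunit : ∀ z ∈ (Set.uIcc (Real.log R') (Real.log R)) ×ℂ (Set.uIcc α₂ α₁),
      IsUnit (A - Complex.exp z • (1 : M)) := by
    intro z hz
    rw [Complex.mem_reProdIm] at hz
    apply hdisc
    rw [Complex.norm_exp]
    have hre : z.re ≤ Real.log R := by
      have := hz.1
      rw [Set.uIcc_of_le hlog] at this
      exact this.2
    calc Real.exp z.re ≤ Real.exp (Real.log R) := Real.exp_le_exp.mpr hre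
      _ = R := Real.exp_log hR0
  have hdiff : DifferentiableOn ℂ (fun z => (A - Complex.exp z • (1 : M))⁻¹)
      ((Set.uIcc (Real.log R') (Real.log R)) ×ℂ (Set.uIcc α₂ α₁)) := by
    have h1 : DifferentiableOn ℂ (fun z => Ring.inverse (A - Complex.exp z • (1 : M)))
        ((Set.uIcc (Real.log R') (Real.log R)) ×ℂ (Set.uIcc α₂ α₁)) :=
      DifferentiableOn.inverse
        (((differentiable_const A).sub
          (Complex.differentiable_exp.smul_const (1 : M))).differentiableOn) hunit
    exact h1.congr (fun z _ => Matrix.nonsing_inv_eq_ringInverse _)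
  exact Complex.integral_boundary_rect_eq_zero_of_differentiableOn
    (fun z => (A - Complex.exp z • (1 : M))⁻¹)
    ⟨Real.log R', α₂⟩ ⟨Real.log R, α₁⟩ hdiff

lemma aux_vert (A : M) (α₁ α₂ R₀ : ℝ) (hR₀ : 0 < R₀) :
    (∫ y : ℝ in α₂..α₁,
      (A - Complex.exp ((Real.log R₀ : ℂ) + (y : ℂ) * Complex.I) • (1 : M))⁻¹)
    = ∫ t in (0:ℝ)..(α₁ - α₂),
        (A - ((R₀ : ℂ) * Complex.exp (Complex.I * ((α₁ - t : ℝ) : ℂ))) • (1 : M))⁻¹ := by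
  have h := intervalIntegral.integral_comp_sub_left (a := (0:ℝ)) (b := α₁ - α₂)
    (fun y : ℝ => (A - ((R₀ : ℂ) * Complex.exp (Complex.I * (y : ℂ))) • (1 : M))⁻¹) α₁
  simp only [sub_sub_cancel, sub_zero] at h
  rw [h]
  apply intervalIntegral.integral_congr
  intro y _
  have hx : Complex.exp ((Real.log R₀ : ℂ) + (y : ℂ) * Complex.I)
      = (R₀ : ℂ) * Complex.exp (Complex.I * (y : ℂ)) := by
    rw [Complex.exp_add, mul_comm ((y : ℂ)) Complex.I]
    congr 1
    rw [← Complex.ofReal_exp, Real.exp_log hR₀]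
  simp only [hx]

lemma aux_horiz (A : M) (α R' R : ℝ) (hR' : 0 < R') (hR'R : R' ≤ R)
    (hu : ∀ r : ℝ, 0 < r →
      IsUnit (A - ((r : ℂ) * Complex.exp (Complex.I * α)) • (1 : M))) :
    (∫ x : ℝ in Real.log R'..Real.log R,
      (A - Complex.exp ((x : ℂ) + (α : ℂ) * Complex.I) • (1 : M))⁻¹)
    = Complex.exp (Complex.I * α) • ∫ r in Set.Ioc R' R,
        ((r : ℂ) * Complex.exp (Complex.I * α))⁻¹ •
          (A - ((r : ℂ) * Complex.exp (Complex.I * α)) • (1 : M))⁻¹ := by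
  set e : ℂ := Complex.exp (Complex.I * α) with he_def
  have he : e ≠ 0 := Complex.exp_ne_zero _
  set g : ℝ → M := fun r => ((r : ℂ))⁻¹ • (A - ((r : ℂ) * e) • (1 : M))⁻¹ with hg_def
  have hkey : ∀ r : ℝ, r ≠ 0 →
      e • (((r : ℂ) * e)⁻¹ • (A - ((r : ℂ) * e) • (1 : M))⁻¹) = g r := by
    intro r hr
    have hr0 : (r : ℂ) ≠ 0 := by exact_mod_cast hr
    rw [hg_def, ← smul_assoc, smul_eq_mul]
    congr 1
    rw [mul_inv_rev, ← mul_assoc, mul_inv_cancel₀ he, one_mul]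
  have hgc : ContinuousOn g (Set.Ioi (0:ℝ)) := by
    have h1 := (aux_continuousOn A e he hu).const_smul e
    apply ContinuousOn.congr h1
    intro r hr
    exact (hkey r (ne_of_gt hr)).symm
  have step1 : (∫ x : ℝ in Real.log R'..Real.log R,
      (A - Complex.exp ((x : ℂ) + (α : ℂ) * Complex.I) • (1 : M))⁻¹)
      = ∫ x in Real.log R'..Real.log R, Real.exp x • g (Real.exp x) := by
    apply intervalIntegral.integral_congr
    intro x _
    have hx : Complex.exp ((x : ℂ) + (α : ℂ) * Complex.I)
        = ((Real.exp x : ℝ) : ℂ) * e := by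
      rw [he_def, Complex.exp_add, mul_comm ((α : ℂ)) Complex.I, ← Complex.ofReal_exp]
    show (A - Complex.exp ((x : ℂ) + (α : ℂ) * Complex.I) • (1 : M))⁻¹
        = Real.exp x • g (Real.exp x)
    rw [hg_def, hx]
    simp only []
    rw [← smul_assoc, Complex.real_smul,
      mul_inv_cancel₀ (by exact_mod_cast Real.exp_ne_zero x), one_smul]
  have step2 : (∫ x in Real.log R'..Real.log R, Real.exp x • g (Real.exp x))
      = ∫ r in R'..R, g r := by
    have h := intervalIntegral.integral_comp_smul_deriv'
      (a := Real.log R') (b := Real.log R) (f := Real.exp) (f' := Real.exp) (g := g)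
      (fun x _ => Real.hasDerivAt_exp x) Real.continuousOn_exp
      (hgc.mono (by
        intro y hy
        obtain ⟨x, _, rfl⟩ := hy
        exact Real.exp_pos x))
    simp only [Function.comp] at h
    rw [h, Real.exp_log hR', Real.exp_log (lt_of_lt_of_le hR' hR'R)]
  rw [step1, step2, intervalIntegral.integral_of_le hR'R]
  rw [← MeasureTheory.integral_smul]
  apply MeasureTheory.setIntegral_congr_fun measurableSet_Ioc
  intro r hr
  exact (hkey r (ne_of_gt (lt_trans hR' hr.1))).symm

lemma aux_real_smul (κ : ℝ) (X : M) : κ • X = ((κ : ℂ)) • X := by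
  rw [← algebraMap_smul ℂ κ X, Complex.coe_algebraMap]

lemma aux_ray_integrand (A : M) (e : ℂ) (κ : ℝ) (hκ : 0 < κ) (r : ℝ) (hr : 0 < r)
    (hu : IsUnit (A - (((κ⁻¹ * r : ℝ) : ℂ) * e) • (1 : M))) :
    ((r : ℂ) * e)⁻¹ • ((κ : ℂ) • A - ((r : ℂ) * e) • (1 : M))⁻¹
      = (((κ : ℂ)) ^ 2)⁻¹ • ((((κ⁻¹ * r : ℝ) : ℂ)) * e)⁻¹ •
          (A - (((κ⁻¹ * r : ℝ) : ℂ) * e) • (1 : M))⁻¹ := by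
  have hkc : (κ : ℂ) ≠ 0 := by exact_mod_cast ne_of_gt hκ
  have hdiv : ((r : ℂ) * e) / (κ : ℂ) = ((κ⁻¹ * r : ℝ) : ℂ) * e := by
    push_cast; ring
  have hu' : IsUnit (A - (((r : ℂ) * e) / (κ : ℂ)) • (1 : M)) := by rw [hdiv]; exact hu
  rw [aux_smul_sub_inv A ((κ : ℂ)) ((r : ℂ) * e) hkc hu', hdiv]
  rw [smul_smul, smul_smul]
  congr 1
  have hrc : (r : ℂ) ≠ 0 := by exact_mod_cast ne_of_gt hr
  by_cases he : e = 0
  · simp [he]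
  · push_cast
    field_simp

lemma aux_arc_integrand (A : M) (κ : ℝ) (hκ : 0 < κ) (R θ' : ℝ)
    (hu : IsUnit (A - (((κ⁻¹ * R : ℝ) : ℂ) * Complex.exp (Complex.I * (θ' : ℂ))) • (1 : M))) :
    ((κ : ℂ) • A - ((R : ℂ) * Complex.exp (Complex.I * (θ' : ℂ))) • (1 : M))⁻¹
      = (κ : ℂ)⁻¹ • (A - (((κ⁻¹ * R : ℝ) : ℂ) * Complex.exp (Complex.I * (θ' : ℂ))) •
          (1 : M))⁻¹ := by
  have hkc : (κ : ℂ) ≠ 0 := by exact_mod_cast ne_of_gt hκ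
  have hdiv : ((R : ℂ) * Complex.exp (Complex.I * (θ' : ℂ))) / (κ : ℂ)
      = ((κ⁻¹ * R : ℝ) : ℂ) * Complex.exp (Complex.I * (θ' : ℂ)) := by
    push_cast; ring
  have hu' : IsUnit (A - (((R : ℂ) * Complex.exp (Complex.I * (θ' : ℂ))) / (κ : ℂ)) •
      (1 : M)) := by rw [hdiv]; exact hu
  rw [aux_smul_sub_inv A ((κ : ℂ)) _ hkc hu', hdiv]

lemma aux_homog (A : M) (α₁ α₂ R κ : ℝ) (hR : 0 < R) (hκ : 1 ≤ κ)
    (hdisc : ∀ w : ℂ, ‖w‖ ≤ R → IsUnit (A - w • (1 : M)))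
    (hray₁ : ∀ r : ℝ, 0 < r →
      IsUnit (A - ((r : ℂ) * Complex.exp (Complex.I * (α₁ : ℂ))) • (1 : M)))
    (hray₂ : ∀ r : ℝ, 0 < r →
      IsUnit (A - ((r : ℂ) * Complex.exp (Complex.I * (α₂ : ℂ))) • (1 : M))) :
    -(Complex.exp (Complex.I * (α₁ : ℂ)) •
        ∫ r in Set.Ioi R, ((r : ℂ) * Complex.exp (Complex.I * (α₁ : ℂ)))⁻¹ •
          ((κ : ℂ) • A - ((r : ℂ) * Complex.exp (Complex.I * (α₁ : ℂ))) • (1 : M))⁻¹)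
      - Complex.I • (∫ t in (0 : ℝ)..(α₁ - α₂),
          ((κ : ℂ) • A - ((R : ℂ) * Complex.exp (Complex.I * ((α₁ - t : ℝ) : ℂ))) • (1 : M))⁻¹)
      + Complex.exp (Complex.I * (α₂ : ℂ)) •
        ∫ r in Set.Ioi R, ((r : ℂ) * Complex.exp (Complex.I * (α₂ : ℂ)))⁻¹ •
          ((κ : ℂ) • A - ((r : ℂ) * Complex.exp (Complex.I * (α₂ : ℂ))) • (1 : M))⁻¹
    = (κ : ℂ)⁻¹ •
      (-(Complex.exp (Complex.I * (α₁ : ℂ)) •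
          ∫ r in Set.Ioi R, ((r : ℂ) * Complex.exp (Complex.I * (α₁ : ℂ)))⁻¹ •
            (A - ((r : ℂ) * Complex.exp (Complex.I * (α₁ : ℂ))) • (1 : M))⁻¹)
        - Complex.I • (∫ t in (0 : ℝ)..(α₁ - α₂),
            (A - ((R : ℂ) * Complex.exp (Complex.I * ((α₁ - t : ℝ) : ℂ))) • (1 : M))⁻¹)
        + Complex.exp (Complex.I * (α₂ : ℂ)) •
          ∫ r in Set.Ioi R, ((r : ℂ) * Complex.exp (Complex.I * (α₂ : ℂ)))⁻¹ •
            (A - ((r : ℂ) * Complex.exp (Complex.I * (α₂ : ℂ))) • (1 : M))⁻¹) := by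
  have hκ0 : 0 < κ := lt_of_lt_of_le one_pos hκ
  have hkc : (κ : ℂ) ≠ 0 := by exact_mod_cast ne_of_gt hκ0
  set e₁ : ℂ := Complex.exp (Complex.I * (α₁ : ℂ)) with he₁_def
  set e₂ : ℂ := Complex.exp (Complex.I * (α₂ : ℂ)) with he₂_def
  have he₁ : e₁ ≠ 0 := Complex.exp_ne_zero _
  have he₂ : e₂ ≠ 0 := Complex.exp_ne_zero _
  set f₁ : ℝ → M := fun r => ((r : ℂ) * e₁)⁻¹ • (A - ((r : ℂ) * e₁) • (1 : M))⁻¹ with hf₁_def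
  set f₂ : ℝ → M := fun r => ((r : ℂ) * e₂)⁻¹ • (A - ((r : ℂ) * e₂) • (1 : M))⁻¹ with hf₂_def
  set R' : ℝ := κ⁻¹ * R with hR'_def
  have hR'0 : 0 < R' := mul_pos (inv_pos.mpr hκ0) hR
  have hR'R : R' ≤ R := by
    rw [hR'_def]
    calc κ⁻¹ * R ≤ 1 * R := by
          apply mul_le_mul_of_nonneg_right _ hR.le
          exact inv_le_one_of_one_le₀ hκ
      _ = R := one_mul R
  have hIccsub : Set.Icc R' R ⊆ Set.Ioi (0 : ℝ) := fun x hx => lt_of_lt_of_le hR'0 hx.1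
  have hdisj : Disjoint (Set.Ioc R' R) (Set.Ioi R) := by
    rw [Set.disjoint_left]
    rintro x hx1 hx2
    exact absurd hx1.2 (not_le.mpr hx2)
  -- integrability
  have hIoi₁ : IntegrableOn f₁ (Set.Ioi R) volume := aux_integrableOn A α₁ R hR hray₁
  have hIoi₂ : IntegrableOn f₂ (Set.Ioi R) volume := aux_integrableOn A α₂ R hR hray₂
  have hIoc₁ : IntegrableOn f₁ (Set.Ioc R' R) volume :=
    (((aux_continuousOn A e₁ he₁ hray₁).mono hIccsub).integrableOn_Icc).mono_set
      Set.Ioc_subset_Icc_self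
  have hIoc₂ : IntegrableOn f₂ (Set.Ioc R' R) volume :=
    (((aux_continuousOn A e₂ he₂ hray₂).mono hIccsub).integrableOn_Icc).mono_set
      Set.Ioc_subset_Icc_self
  have hsplit₁ : ∫ r in Set.Ioi R', f₁ r
      = (∫ r in Set.Ioc R' R, f₁ r) + ∫ r in Set.Ioi R, f₁ r := by
    rw [← Set.Ioc_union_Ioi_eq_Ioi hR'R,
      MeasureTheory.setIntegral_union hdisj measurableSet_Ioi hIoc₁ hIoi₁]
  have hsplit₂ : ∫ r in Set.Ioi R', f₂ r
      = (∫ r in Set.Ioc R' R, f₂ r) + ∫ r in Set.Ioi R, f₂ r := by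
    rw [← Set.Ioc_union_Ioi_eq_Ioi hR'R,
      MeasureTheory.setIntegral_union hdisj measurableSet_Ioi hIoc₂ hIoi₂]
  -- scalar fact
  have hsc : (((κ : ℂ)) ^ 2)⁻¹ * (κ : ℂ) = (κ : ℂ)⁻¹ := by
    rw [sq, mul_inv, mul_assoc, inv_mul_cancel₀ hkc, mul_one]
  -- ray integral computation
  have hI₁ : (∫ r in Set.Ioi R, ((r : ℂ) * e₁)⁻¹ •
      ((κ : ℂ) • A - ((r : ℂ) * e₁) • (1 : M))⁻¹)
      = (κ : ℂ)⁻¹ • ((∫ r in Set.Ioc R' R, f₁ r) + ∫ r in Set.Ioi R, f₁ r) := by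
    rw [MeasureTheory.setIntegral_congr_fun measurableSet_Ioi
      (fun r hr => aux_ray_integrand A e₁ κ hκ0 r (lt_trans hR hr)
        (hray₁ _ (mul_pos (inv_pos.mpr hκ0) (lt_trans hR hr))))]
    rw [MeasureTheory.integral_smul, MeasureTheory.integral_comp_mul_left_Ioi f₁ R
      (inv_pos.mpr hκ0), inv_inv, aux_real_smul, smul_smul, hsc, ← hR'_def, hsplit₁]
  have hI₂ : (∫ r in Set.Ioi R, ((r : ℂ) * e₂)⁻¹ •
      ((κ : ℂ) • A - ((r : ℂ) * e₂) • (1 : M))⁻¹)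
      = (κ : ℂ)⁻¹ • ((∫ r in Set.Ioc R' R, f₂ r) + ∫ r in Set.Ioi R, f₂ r) := by
    rw [MeasureTheory.setIntegral_congr_fun measurableSet_Ioi
      (fun r hr => aux_ray_integrand A e₂ κ hκ0 r (lt_trans hR hr)
        (hray₂ _ (mul_pos (inv_pos.mpr hκ0) (lt_trans hR hr))))]
    rw [MeasureTheory.integral_smul, MeasureTheory.integral_comp_mul_left_Ioi f₂ R
      (inv_pos.mpr hκ0), inv_inv, aux_real_smul, smul_smul, hsc, ← hR'_def, hsplit₂]
  -- arc integral computation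
  have hArc : (∫ t in (0 : ℝ)..(α₁ - α₂),
      ((κ : ℂ) • A - ((R : ℂ) * Complex.exp (Complex.I * ((α₁ - t : ℝ) : ℂ))) • (1 : M))⁻¹)
      = (κ : ℂ)⁻¹ • ∫ t in (0 : ℝ)..(α₁ - α₂),
          (A - ((R' : ℝ) * Complex.exp (Complex.I * ((α₁ - t : ℝ) : ℂ))) • (1 : M))⁻¹ := by
    rw [← intervalIntegral.integral_smul]
    apply intervalIntegral.integral_congr
    intro t _
    exact aux_arc_integrand A κ hκ0 R (α₁ - t)
      (hdisc _ (by rw [aux_norm_re _ _ hR'0]; exact hR'R))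
  -- Cauchy deformation
  have hC := aux_cauchy A α₁ α₂ R' R hR'0 hR'R hdisc
  rw [aux_horiz A α₂ R' R hR'0 hR'R hray₂, aux_horiz A α₁ R' R hR'0 hR'R hray₁,
    aux_vert A α₁ α₂ R (lt_of_lt_of_le hR'0 hR'R), aux_vert A α₁ α₂ R' hR'0] at hC
  rw [hI₁, hI₂, hArc]
  set S₁ : M := ∫ r in Set.Ioc R' R, f₁ r
  set S₂ : M := ∫ r in Set.Ioc R' R, f₂ r
  set T₁ : M := ∫ r in Set.Ioi R, f₁ r
  set T₂ : M := ∫ r in Set.Ioi R, f₂ r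
  set W : M := ∫ t in (0 : ℝ)..(α₁ - α₂),
    (A - ((R : ℂ) * Complex.exp (Complex.I * ((α₁ - t : ℝ) : ℂ))) • (1 : M))⁻¹
  set W' : M := ∫ t in (0 : ℝ)..(α₁ - α₂),
    (A - ((R' : ℝ) * Complex.exp (Complex.I * ((α₁ - t : ℝ) : ℂ))) • (1 : M))⁻¹
  -- hC : e₂ • S₂ - e₁ • S₁ + I • W - I • W' = 0
  rw [smul_comm e₁, smul_comm e₂, smul_comm Complex.I]
  rw [← smul_neg, ← smul_sub, ← smul_add]
  congr 1
  rw [smul_add e₁, smul_add e₂, ← sub_eq_zero]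
  have h3 : -(e₁ • S₁ + e₁ • T₁) - Complex.I • W' + (e₂ • S₂ + e₂ • T₂)
      - (-(e₁ • T₁) - Complex.I • W + e₂ • T₂)
      = e₂ • S₂ - e₁ • S₁ + Complex.I • W - Complex.I • W' := by abel
  rw [h3, hC]

end SectorialAux

set_option maxHeartbeats 1000000 in
/-- **Homogeneity of the sectorial symbol integral**: for a continuous symbol
`a : ℝⁿ → M(N,ℂ)`, positively homogeneous of degree `m > 0`, whose resolvent exists along
the two rays of arguments `α₁, α₂` and on the disc of radius `R` (for `|ξ| ≥ 1`), the two
improper ray integrals of `λ^{−1}(a(ξ)−λ)^{−1}` converge absolutely and the contour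
integral `b(ξ) = ∫_{Γ₊} λ^{−1}(a(ξ)−λ)^{−1} dλ` satisfies `b(cξ) = c^{−m} b(ξ)` for all
`c ≥ 1` and `|ξ| ≥ 1`. -/
theorem sectorialSymbolIntegral_homogeneous (n N : ℕ) (hN : 1 ≤ N) (m : ℝ) (hm : 0 < m)
    (a : EuclideanSpace ℝ (Fin n) → Matrix (Fin N) (Fin N) ℂ) (ha : Continuous a)
    (hhom : ∀ c : ℝ, 0 < c → ∀ ξ, a (c • ξ) = (c ^ m : ℝ) • a ξ)
    (α₁ α₂ : ℝ) (hangle₁ : 0 < α₁ - α₂) (hangle₂ : α₁ - α₂ < 2 * Real.pi)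
    (R : ℝ) (hR : 0 < R)
    (hdisc : ∀ ξ : EuclideanSpace ℝ (Fin n), 1 ≤ ‖ξ‖ → ∀ lam : ℂ, ‖lam‖ ≤ R →
      IsUnit (a ξ - lam • (1 : Matrix (Fin N) (Fin N) ℂ)))
    (hray : ∀ ξ : EuclideanSpace ℝ (Fin n), 1 ≤ ‖ξ‖ → ∀ r : ℝ, 0 < r →
      IsUnit (a ξ - ((r : ℂ) * Complex.exp (Complex.I * (α₁ : ℂ))) •
        (1 : Matrix (Fin N) (Fin N) ℂ)) ∧
      IsUnit (a ξ - ((r : ℂ) * Complex.exp (Complex.I * (α₂ : ℂ))) •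
        (1 : Matrix (Fin N) (Fin N) ℂ))) :
    ∀ ξ : EuclideanSpace ℝ (Fin n), 1 ≤ ‖ξ‖ →
      IntegrableOn (fun r : ℝ => ((r : ℂ) * Complex.exp (Complex.I * (α₁ : ℂ)))⁻¹ •
          (a ξ - ((r : ℂ) * Complex.exp (Complex.I * (α₁ : ℂ))) •
            (1 : Matrix (Fin N) (Fin N) ℂ))⁻¹) (Set.Ioi R) volume ∧
      IntegrableOn (fun r : ℝ => ((r : ℂ) * Complex.exp (Complex.I * (α₂ : ℂ)))⁻¹ •
          (a ξ - ((r : ℂ) * Complex.exp (Complex.I * (α₂ : ℂ))) •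
            (1 : Matrix (Fin N) (Fin N) ℂ))⁻¹) (Set.Ioi R) volume ∧
      ∀ c : ℝ, 1 ≤ c →
        sectorialSymbolIntegral n N a α₁ α₂ R (c • ξ) =
          (c ^ (-m) : ℝ) • sectorialSymbolIntegral n N a α₁ α₂ R ξ := by
  intro ξ hξ
  have hray₁ := fun r hr => (hray ξ hξ r hr).1
  have hray₂ := fun r hr => (hray ξ hξ r hr).2
  refine ⟨aux_integrableOn (a ξ) α₁ R hR hray₁, aux_integrableOn (a ξ) α₂ R hR hray₂, ?_⟩
  intro c hc
  have hc0 : 0 < c := lt_of_lt_of_le one_pos hc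
  have hκ1 : 1 ≤ c ^ m := Real.one_le_rpow hc hm.le
  have hacξ : a (c • ξ) = ((c ^ m : ℝ) : ℂ) • a ξ := by
    rw [hhom c hc0 ξ, aux_real_smul]
  have hcm : ((c ^ (-m) : ℝ) : ℂ) = ((c ^ m : ℝ) : ℂ)⁻¹ := by
    rw [Real.rpow_neg hc0.le]; push_cast; rfl
  rw [sectorialSymbolIntegral, sectorialSymbolIntegral, hacξ,
    aux_real_smul (c ^ (-m)), hcm]
  exact aux_homog (a ξ) α₁ α₂ R (c ^ m) hR hκ1 (fun w hw => hdisc ξ hξ w hw) hray₁ hray₂
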